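/- Let g ∈ ℤ/p be nonzero and x ∈ ℤⁿ. The element (x,g) of Γ = ℤⁿ ⋊_ρ ℤ/p has finite order if and only if Norm_g(x) = 0, and in that case (x,g) has order exactly p. -/

import Mathlib

/-- The multiplicative group structure on `AddAut A` (composition), as in the older Mathlib. -/
instance AddAut.group {A : Type*} [Add A] : Group (AddAut A) where
  mul g h := AddEquiv.trans h g
  one := AddEquiv.refl _
  inv := AddEquiv.symm
  mul_assoc _ _ _ := rfl
  one_mul _ := rfl
  mul_one _ := rfl
  inv_mul_cancel := AddEquiv.self_trans_symm

/-- The monoid homomorphism sending an additive automorphism of `A` to the corresponding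
multiplicative automorphism of `Multiplicative A`. -/
def addAutToMulAut {A : Type*} [AddGroup A] : AddAut A →* MulAut (Multiplicative A) where
  toFun e := AddEquiv.toMultiplicative e
  map_one' := rfl
  map_mul' _ _ := rfl

/-- The semidirect product `Γ = ℤⁿ ⋊_ρ ℤ/p` (written multiplicatively), with multiplication
`(x,g)·(x',g') = (x + ρ(g)x', g+g')`. -/
abbrev Gam (p n : ℕ) (ρ : Multiplicative (ZMod p) →* AddAut (Fin n → ℤ)) : Type :=
  (Multiplicative (Fin n → ℤ)) ⋊[addAutToMulAut.comp ρ] (Multiplicative (ZMod p))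

private lemma gam_pow (p n : ℕ) (ρ : Multiplicative (ZMod p) →* AddAut (Fin n → ℤ))
    (g : ZMod p) (x : Fin n → ℤ) (k : ℕ) :
    ((⟨Multiplicative.ofAdd x, Multiplicative.ofAdd g⟩ : Gam p n ρ)) ^ k =
      ⟨Multiplicative.ofAdd (∑ i ∈ Finset.range k, ((ρ (Multiplicative.ofAdd g)) ^ i) x),
       Multiplicative.ofAdd (k • g)⟩ := by
  have key : ∀ (h : Multiplicative (ZMod p)) (y : Fin n → ℤ),
      ((addAutToMulAut.comp ρ) h) (Multiplicative.ofAdd y) = Multiplicative.ofAdd (ρ h y) :=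
    fun _ _ => rfl
  induction k with
  | zero => ext <;> simp
  | succ k ih =>
    rw [pow_succ, ih]
    ext
    · rw [SemidirectProduct.mul_left, key, Finset.sum_range_succ, ofAdd_add, ofAdd_nsmul, map_pow]
    · rw [SemidirectProduct.mul_right, succ_nsmul, ofAdd_add]

/-- for `g ≠ 0` in `ℤ/p` and `x ∈ ℤⁿ`, the element `(x,g)` of `Γ = ℤⁿ ⋊_ρ ℤ/p`
has finite order if and only if `Norm_g(x) = Σ_{i=0}^{p−1} ρ(g)^i x` vanishes, in which case
its order is exactly `p`. -/
theorem stmt2 (p n : ℕ) [Fact p.Prime]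
    (ρ : Multiplicative (ZMod p) →* AddAut (Fin n → ℤ))
    (g : ZMod p) (hg : g ≠ 0) (x : Fin n → ℤ) :
    (IsOfFinOrder (⟨Multiplicative.ofAdd x, Multiplicative.ofAdd g⟩ : Gam p n ρ) ↔
        ∑ i ∈ Finset.range p, ((ρ (Multiplicative.ofAdd g)) ^ i) x = 0) ∧
    (∑ i ∈ Finset.range p, ((ρ (Multiplicative.ofAdd g)) ^ i) x = 0 →
        orderOf (⟨Multiplicative.ofAdd x, Multiplicative.ofAdd g⟩ : Gam p n ρ) = p) := by
  set a : Gam p n ρ := ⟨Multiplicative.ofAdd x, Multiplicative.ofAdd g⟩ with ha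
  set N : Fin n → ℤ := ∑ i ∈ Finset.range p, ((ρ (Multiplicative.ofAdd g)) ^ i) x with hN
  have hp : p.Prime := Fact.out
  have hap : a ^ p = SemidirectProduct.inl (Multiplicative.ofAdd N) := by
    rw [ha, gam_pow]
    have : p • g = 0 := by
      rw [nsmul_eq_mul, ZMod.natCast_self, zero_mul]
    ext
    · rfl
    · simp [this]
  -- a ≠ 1 since g ≠ 0
  have hane : a ≠ 1 := by
    intro h
    apply hg
    have := congrArg SemidirectProduct.right h
    simpa [ha] using this
  have hord : N = 0 → orderOf a = p := by
    intro h0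
    have h1 : a ^ p = 1 := by
      rw [hap, h0]
      simp
    have hdvd : orderOf a ∣ p := orderOf_dvd_of_pow_eq_one h1
    rcases hp.eq_one_or_self_of_dvd _ hdvd with h | h
    · exact absurd (orderOf_eq_one_iff.mp h) hane
    · exact h
  refine ⟨⟨fun hfin => ?_, fun h0 => ?_⟩, hord⟩
  · -- a^p = inl (ofAdd N) has finite order, and ℤⁿ is torsion-free, so N = 0
    have hfin2 : IsOfFinOrder (SemidirectProduct.inl (Multiplicative.ofAdd N) : Gam p n ρ) := by
      rw [← hap]; exact hfin.pow
    obtain ⟨k, hk, hk1⟩ := isOfFinOrder_iff_pow_eq_one.mp hfin2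
    rw [← map_pow, ← ofAdd_nsmul] at hk1
    have h2 : Multiplicative.ofAdd (k • N) = (1 : Multiplicative (Fin n → ℤ)) := by
      exact SemidirectProduct.inl_injective (by simpa using hk1)
    have h3 : k • N = 0 := by
      have := congrArg Multiplicative.toAdd h2
      simpa using this
    funext i
    have h4 : (k : ℤ) * N i = 0 := by
      have := congrFun h3 i
      simpa [nsmul_eq_mul] using this
    rcases mul_eq_zero.mp h4 with h | h
    · exact absurd (by exact_mod_cast h) hk.ne'
    · simpa using h
  · -- order p, hence finite
    have h := hord h0
    by_contra hcon
    rw [orderOf_eq_zero hcon] at h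
    exact hp.ne_zero h.symm
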